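/- Let A be a nonnegative integral m×n matrix, b ∈ Z_{≥0}^m, a ∈ Z_{≥0}^n, a_0 ∈ Z_{≥0}. Suppose every vertex of the convex hull of M(a, a_0) = {x ∈ Z_{≥0}^n : a·x = a_0} is a vertex of the convex hull of M(A,b) (i.e., V(a, a_0) ⊆ V(A, b) — the aggregation preserves vertices), and let x^0 = (x^0_1, ..., x^0_n) be a vertex of the convex hull of M(A,b) with a·x^0 = a_0. Then a_0 ≥ ∏_{i=1}^n (x^0_i + 1) − 1. -/

import Mathlib

/-- Key lemma: any point of `Ma` that vanishes on the coordinates where `a` is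
zero lies in the convex hull of `MA`, given that extreme points of `conv Ma`
are extreme points of `conv MA`. -/
private lemma stmt7_aux (n : ℕ) (a : Fin n → ℤ) (ha : ∀ i, 0 ≤ a i) (a0 : ℤ) (ha0 : 0 ≤ a0)
    (MA Ma : Set (Fin n → ℝ))
    (hMa : Ma = {x : Fin n → ℝ | (∀ j, ∃ k : ℤ, 0 ≤ k ∧ x j = (k : ℝ)) ∧
        ∑ j, (a j : ℝ) * x j = (a0 : ℝ)})
    (hVV : (convexHull ℝ Ma).extremePoints ℝ ⊆ (convexHull ℝ MA).extremePoints ℝ)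
    (y : Fin n → ℤ) (hy0 : ∀ j, 0 ≤ y j) (hya : ∑ j, a j * y j = a0)
    (hyZ : ∀ j, a j = 0 → y j = 0) :
    (fun j => (y j : ℝ)) ∈ convexHull ℝ MA := by
  classical
  set S : Set (Fin n → ℝ) := {x | x ∈ Ma ∧ ∀ j, a j = 0 → x j = 0} with hS
  -- nonnegativity of coordinates on conv Ma
  have hMaNN : ∀ x ∈ convexHull ℝ Ma, ∀ j, (0:ℝ) ≤ x j := by
    have hsub : convexHull ℝ Ma ⊆ Set.Ici (0 : Fin n → ℝ) := by
      apply convexHull_min _ (convex_Ici _)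
      intro x hx
      rw [hMa] at hx
      intro j
      obtain ⟨k, hk0, hkx⟩ := hx.1 j
      have : (0:ℝ) ≤ x j := by rw [hkx]; exact_mod_cast hk0
      simpa using this
    intro x hx j
    exact hsub hx j
  -- S is finite
  have hSfin : S.Finite := by
    apply Set.Finite.subset
      (((Set.finite_Icc (0 : Fin n → ℤ) (fun _ => a0))).image (fun k => fun j => (k j : ℝ)))
    intro x hx
    obtain ⟨hxMa, hxZ⟩ := hx
    rw [hMa] at hxMa
    obtain ⟨hint, hsum⟩ := hxMa
    choose k hk0 hkx using hint
    refine ⟨k, ?_, by funext j; exact (hkx j).symm⟩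
    rw [Set.mem_Icc]
    constructor
    · intro j; exact hk0 j
    · intro j
      by_cases h : a j = 0
      · have hkr : (k j : ℝ) = 0 := by rw [← hkx j]; exact hxZ j h
        have hkz : k j = 0 := by exact_mod_cast hkr
        rw [hkz]; exact ha0
      · have haj : (1:ℤ) ≤ a j := lt_of_le_of_ne (ha j) (Ne.symm h)
        have hterm : (a j : ℝ) * x j ≤ (a0 : ℝ) := by
          rw [← hsum]
          apply Finset.single_le_sum (f := fun j => (a j : ℝ) * x j) _ (Finset.mem_univ j)
          intro i _
          have hxi : (0:ℝ) ≤ x i := by rw [hkx i]; exact_mod_cast hk0 i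
          exact mul_nonneg (by exact_mod_cast ha i) hxi
        have hxj0 : (0:ℝ) ≤ x j := by rw [hkx j]; exact_mod_cast hk0 j
        have h1 : (1:ℝ) * x j ≤ (a j : ℝ) * x j := by
          apply mul_le_mul_of_nonneg_right _ hxj0
          exact_mod_cast haj
        have : (x j : ℝ) ≤ (a0 : ℝ) := by linarith
        rw [hkx j] at this
        exact_mod_cast this
  have hSMa : S ⊆ Ma := fun x hx => hx.1
  -- Krein–Milman on conv S
  set E0 : Set (Fin n → ℝ) := (convexHull ℝ S).extremePoints ℝ with hE0
  have hE0S : E0 ⊆ S := extremePoints_convexHull_subset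
  have hE0fin : E0.Finite := hSfin.subset hE0S
  have hKM : convexHull ℝ S = convexHull ℝ E0 := by
    have h1 := closure_convexHull_extremePoints (hSfin.isCompact_convexHull ℝ)
      (convex_convexHull ℝ S)
    rw [(hE0fin.isClosed_convexHull ℝ).closure_eq] at h1
    exact h1.symm
  -- points of conv Ma vanishing on the zero coordinates lie in conv S
  have hC : ∀ x ∈ convexHull ℝ Ma, (∀ j, a j = 0 → x j = 0) → x ∈ convexHull ℝ S := by
    intro x hx hxZ
    rw [convexHull_eq] at hx
    obtain ⟨ι, t, w, z, hw0, hw1, hzMa, hcm⟩ := hx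
    have hzNN : ∀ i ∈ t, ∀ j, (0:ℝ) ≤ z i j := by
      intro i hi j
      exact hMaNN (z i) (subset_convexHull ℝ Ma (hzMa i hi)) j
    have hxeq : ∀ j, x j = ∑ i ∈ t, w i * z i j := by
      intro j
      rw [← hcm, Finset.centerMass_eq_of_sum_1 _ _ hw1]
      rw [Finset.sum_apply]
      simp [smul_eq_mul]
    have hzero : ∀ j, a j = 0 → ∀ i ∈ t, w i * z i j = 0 := by
      intro j hj
      have hsum0 : ∑ i ∈ t, w i * z i j = 0 := by rw [← hxeq j, hxZ j hj]
      exact (Finset.sum_eq_zero_iff_of_nonneg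
        (fun i hi => mul_nonneg (hw0 i hi) (hzNN i hi j))).mp hsum0
    rw [← hcm, ← Finset.centerMass_filter_ne_zero (z := z)]
    apply Finset.centerMass_mem_convexHull
    · intro i hi; exact hw0 i (Finset.mem_filter.mp hi).1
    · rw [Finset.sum_filter_ne_zero, hw1]; norm_num
    · intro i hi
      obtain ⟨hit, hwne⟩ := Finset.mem_filter.mp hi
      refine ⟨hzMa i hit, fun j hj => ?_⟩
      rcases mul_eq_zero.mp (hzero j hj i hit) with h | h
      · exact absurd h hwne
      · exact h
  -- extreme points of conv S are extreme points of conv Ma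
  have hB : E0 ⊆ (convexHull ℝ Ma).extremePoints ℝ := by
    intro u hu
    have huS : u ∈ S := hE0S hu
    refine ⟨convexHull_mono hSMa hu.1, ?_⟩
    intro x1 h1 x2 h2 hseg
    obtain ⟨c, d, hc, hd, hcd, hsum⟩ := hseg
    have hz12 : ∀ j, a j = 0 → x1 j = 0 ∧ x2 j = 0 := by
      intro j hj
      have h0 : c * x1 j + d * x2 j = 0 := by
        have := congrFun hsum j
        simp only [Pi.add_apply, Pi.smul_apply, smul_eq_mul] at this
        rw [this]
        exact huS.2 j hj
      have hx1j := hMaNN x1 h1 j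
      have hx2j := hMaNN x2 h2 j
      constructor <;> nlinarith
    have h1' : x1 ∈ convexHull ℝ S := hC x1 h1 (fun j hj => (hz12 j hj).1)
    have h2' : x2 ∈ convexHull ℝ S := hC x2 h2 (fun j hj => (hz12 j hj).2)
    exact hu.2 h1' h2' ⟨c, d, hc, hd, hcd, hsum⟩
  -- conclude
  have hyS : (fun j => (y j : ℝ)) ∈ S := by
    refine ⟨?_, fun j hj => by show ((y j : ℝ)) = 0; rw [hyZ j hj]; norm_num⟩
    rw [hMa]
    refine ⟨fun j => ⟨y j, hy0 j, rfl⟩, ?_⟩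
    show ∑ j, (a j : ℝ) * ((y j : ℝ)) = (a0 : ℝ)
    rw [← hya]
    push_cast
    ring
  have hmem : (fun j => (y j : ℝ)) ∈ convexHull ℝ E0 := by
    rw [← hKM]; exact subset_convexHull ℝ S hyS
  have hE0MA : E0 ⊆ convexHull ℝ MA := fun u hu => extremePoints_subset (hVV (hB hu))
  exact convexHull_min hE0MA (convex_convexHull ℝ MA) hmem

/-- Theorem 3: If aggregation `(a, a₀)` preserves vertices,
`V(a,a₀) ⊆ V(A,b)`, and `x⁰ ∈ V(A,b)` with `a·x⁰ = a₀`, then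
`a₀ ≥ ∏ (x⁰ᵢ + 1) − 1`. -/
theorem stmt7 (m n : ℕ) (A : Matrix (Fin m) (Fin n) ℤ)
    (hA : ∀ i j, 0 ≤ A i j) (b : Fin m → ℤ) (hb : ∀ i, 0 ≤ b i)
    (a : Fin n → ℤ) (ha : ∀ i, 0 ≤ a i) (a0 : ℤ) (ha0 : 0 ≤ a0)
    (MA Ma : Set (Fin n → ℝ))
    (hMA : MA = {x : Fin n → ℝ | (∀ j, ∃ k : ℤ, 0 ≤ k ∧ x j = (k : ℝ)) ∧
        ∀ i, ∑ j, (A i j : ℝ) * x j = (b i : ℝ)})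
    (hMa : Ma = {x : Fin n → ℝ | (∀ j, ∃ k : ℤ, 0 ≤ k ∧ x j = (k : ℝ)) ∧
        ∑ j, (a j : ℝ) * x j = (a0 : ℝ)})
    (hVV : (convexHull ℝ Ma).extremePoints ℝ ⊆ (convexHull ℝ MA).extremePoints ℝ)
    (x0 : Fin n → ℤ) (hx0 : ∀ j, 0 ≤ x0 j)
    (hx0V : (fun j => (x0 j : ℝ)) ∈ (convexHull ℝ MA).extremePoints ℝ)
    (hx0a : ∑ j, a j * x0 j = a0) :
    (∏ i, (x0 i + 1)) - 1 ≤ a0 := by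
  classical
  have haux : ∀ (y : Fin n → ℤ), (∀ j, 0 ≤ y j) → (∑ j, a j * y j = a0) →
      (∀ j, a j = 0 → y j = 0) → (fun j => (y j : ℝ)) ∈ convexHull ℝ MA :=
    fun y hy0 hya hyZ => stmt7_aux n a ha a0 ha0 MA Ma hMa hVV y hy0 hya hyZ
  have hx0MA : (fun j => (x0 j : ℝ)) ∈ MA := extremePoints_convexHull_subset hx0V
  -- linear constraints persist on the convex hull
  have hlin : convexHull ℝ MA ⊆ {x : Fin n → ℝ | ∀ i, ∑ j, (A i j : ℝ) * x j = (b i : ℝ)} := by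
    apply convexHull_min
    · intro x hx; rw [hMA] at hx; exact hx.2
    · intro x hx y hy c d hc hd hcd
      intro i
      simp only [Set.mem_setOf_eq] at hx hy ⊢
      calc ∑ j, (A i j : ℝ) * (c • x + d • y) j
          = ∑ j, (c * ((A i j : ℝ) * x j) + d * ((A i j : ℝ) * y j)) :=
            Finset.sum_congr rfl (fun j _ => by
              simp only [Pi.add_apply, Pi.smul_apply, smul_eq_mul]; ring)
        _ = c * ∑ j, (A i j : ℝ) * x j + d * ∑ j, (A i j : ℝ) * y j := by
            rw [Finset.sum_add_distrib, Finset.mul_sum, Finset.mul_sum]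
        _ = (c + d) * (b i : ℝ) := by rw [hx i, hy i]; ring
        _ = (b i : ℝ) := by rw [hcd, one_mul]
  have hAx0 : ∀ i, ∑ j, (A i j : ℝ) * (x0 j : ℝ) = (b i : ℝ) := by
    rw [hMA] at hx0MA; exact hx0MA.2
  -- Step 1: x0 vanishes where a does
  have hZ : ∀ j, a j = 0 → x0 j = 0 := by
    by_contra hcon
    push_neg at hcon
    obtain ⟨j0, hj0a, hj0x⟩ := hcon
    set u : Fin n → ℤ := fun j => if a j = 0 then 0 else x0 j with hu
    have huMA : (fun j => (u j : ℝ)) ∈ convexHull ℝ MA := by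
      apply haux
      · intro j; by_cases h : a j = 0 <;> simp [hu, h, hx0 j]
      · rw [← hx0a]
        apply Finset.sum_congr rfl
        intro j _
        by_cases h : a j = 0 <;> simp [hu, h]
      · intro j hj; simp [hu, hj]
    have huA : ∀ i, ∑ j, (A i j : ℝ) * (u j : ℝ) = (b i : ℝ) := hlin huMA
    set w : Fin n → ℤ := fun j => 2 * x0 j - u j with hw
    have hwMA : (fun j => (w j : ℝ)) ∈ MA := by
      rw [hMA]
      refine ⟨fun j => ⟨w j, ?_, rfl⟩, ?_⟩
      · have := hx0 j
        by_cases h : a j = 0 <;> simp [hw, hu, h] <;> omega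
      · intro i
        have hcalc : ∀ j, (A i j : ℝ) * (w j : ℝ)
            = 2 * ((A i j : ℝ) * (x0 j : ℝ)) - (A i j : ℝ) * (u j : ℝ) := by
          intro j; simp only [hw]; push_cast; ring
        rw [Finset.sum_congr rfl (fun j _ => hcalc j), Finset.sum_sub_distrib,
          ← Finset.mul_sum, hAx0 i, huA i]
        ring
    have hseg : (fun j => (x0 j : ℝ)) ∈
        openSegment ℝ (fun j => (u j : ℝ)) (fun j => (w j : ℝ)) := by
      refine ⟨1/2, 1/2, by norm_num, by norm_num, by norm_num, ?_⟩
      funext j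
      simp only [Pi.add_apply, Pi.smul_apply, smul_eq_mul, hw]
      push_cast
      ring
    have heq := hx0V.2 huMA (subset_convexHull ℝ MA hwMA) hseg
    have hval : (u j0 : ℝ) = (x0 j0 : ℝ) := congrFun heq j0
    have : u j0 = x0 j0 := by exact_mod_cast hval
    simp [hu, hj0a] at this
    exact hj0x this.symm
  -- Step 2: injectivity of t ↦ a·t on the box [0, x0]
  have key : ∀ t ∈ Finset.Icc (0 : Fin n → ℤ) x0, ∀ t' ∈ Finset.Icc (0 : Fin n → ℤ) x0,
      (∑ j, a j * t j) = (∑ j, a j * t' j) → t = t' := by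
    intro t ht t' ht' hsum
    rw [Finset.mem_Icc] at ht ht'
    have ht1 : ∀ j, 0 ≤ t j := fun j => ht.1 j
    have ht2 : ∀ j, t j ≤ x0 j := fun j => ht.2 j
    have ht'1 : ∀ j, 0 ≤ t' j := fun j => ht'.1 j
    have ht'2 : ∀ j, t' j ≤ x0 j := fun j => ht'.2 j
    by_contra hne
    set y : Fin n → ℤ := fun j => x0 j - t j + t' j with hy
    set z : Fin n → ℤ := fun j => x0 j + t j - t' j with hz
    have hsplit : ∀ (s : Fin n → ℤ), (∀ j, s j = x0 j - t j + t' j ∨ s j = x0 j + t j - t' j) →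
        True := fun _ _ => trivial
    have hya : ∑ j, a j * y j = a0 := by
      have : ∀ j, a j * y j = a j * x0 j - a j * t j + a j * t' j := by
        intro j; simp only [hy]; ring
      rw [Finset.sum_congr rfl (fun j _ => this j), Finset.sum_add_distrib,
        Finset.sum_sub_distrib]
      omega
    have hza : ∑ j, a j * z j = a0 := by
      have : ∀ j, a j * z j = a j * x0 j + a j * t j - a j * t' j := by
        intro j; simp only [hz]; ring
      rw [Finset.sum_congr rfl (fun j _ => this j), Finset.sum_sub_distrib,
        Finset.sum_add_distrib]
      omega
    have hyMA : (fun j => (y j : ℝ)) ∈ convexHull ℝ MA := by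
      apply haux _ (fun j => by have := ht2 j; have := ht'1 j; simp only [hy]; omega) hya
      intro j hj
      have h0 := hZ j hj
      have := ht1 j; have := ht2 j; have := ht'1 j; have := ht'2 j
      simp only [hy]; omega
    have hzMA : (fun j => (z j : ℝ)) ∈ convexHull ℝ MA := by
      apply haux _ (fun j => by have := ht1 j; have := ht'2 j; simp only [hz]; omega) hza
      intro j hj
      have h0 := hZ j hj
      have := ht1 j; have := ht2 j; have := ht'1 j; have := ht'2 j
      simp only [hz]; omega
    have hseg : (fun j => (x0 j : ℝ)) ∈
        openSegment ℝ (fun j => (y j : ℝ)) (fun j => (z j : ℝ)) := by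
      refine ⟨1/2, 1/2, by norm_num, by norm_num, by norm_num, ?_⟩
      funext j
      simp only [Pi.add_apply, Pi.smul_apply, smul_eq_mul, hy, hz]
      push_cast
      ring
    have heq := hx0V.2 hyMA hzMA hseg
    apply hne
    funext j
    have hval : (y j : ℝ) = (x0 j : ℝ) := congrFun heq j
    have : y j = x0 j := by exact_mod_cast hval
    simp only [hy] at this
    omega
  -- counting
  have himage : ∀ t ∈ Finset.Icc (0 : Fin n → ℤ) x0,
      (∑ j, a j * t j) ∈ Finset.Icc (0 : ℤ) a0 := by
    intro t ht
    rw [Finset.mem_Icc] at ht ⊢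
    constructor
    · exact Finset.sum_nonneg fun j _ => mul_nonneg (ha j) (ht.1 j)
    · rw [← hx0a]
      exact Finset.sum_le_sum fun j _ => mul_le_mul_of_nonneg_left (ht.2 j) (ha j)
  have hcard := Finset.card_le_card_of_injOn (fun t => ∑ j, a j * t j) (fun t ht => himage t ht)
    (fun t ht t' ht' h => key t ht t' ht' h)
  rw [Pi.card_Icc] at hcard
  simp only [Int.card_Icc, Pi.zero_apply, sub_zero] at hcard
  have h1 : (∏ i, (x0 i + 1)) = ((∏ i, (x0 i + 1).toNat : ℕ) : ℤ) := by
    push_cast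
    apply Finset.prod_congr rfl
    intro i _
    rw [Int.toNat_of_nonneg (by have := hx0 i; omega)]
  have h2 : (((a0 + 1).toNat : ℕ) : ℤ) = a0 + 1 := Int.toNat_of_nonneg (by omega)
  have h3 : ((∏ i, (x0 i + 1).toNat : ℕ) : ℤ) ≤ (((a0 + 1).toNat : ℕ) : ℤ) := by
    exact_mod_cast hcard
  rw [h1]
  omega
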